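/- The syntactic ordering on parametric expressions implies the semantic ordering: if E₁ ⊑ E₂ in the inductively defined syntactic order (basic elements ordered as specified, MAX{E_{1.1},…,E_{1.n}} ⊑ MAX{E_{2.1},…,E_{2.m}} iff ∀i ∃j. E_{1.i} ⊑ E_{2.j}, and MIN{E_{1.1},…,E_{1.n}} ⊑ MIN{E_{2.1},…,E_{2.m}} iff ∀j ∃i. E_{1.i} ⊑ E_{2.j}), then ⟦E₁⟧(v) ≤ ⟦E₂⟧(v) for every parameter valuation v. -/

import Mathlib

open scoped NNReal ENNReal

/-- Parametric expressions over a finite parameter set `P`: `∞`, basic terms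
`|(Σᵢ aᵢ·pᵢ + b)/w − 1|` (with `aᵢ ∈ ℕ`, `b ∈ ℚ≥0`, `w ∈ ℚ≥0`), and finite
`MIN`s and `MAX`es. -/
inductive PExpr (P : Type) where
  | inf : PExpr P
  | basic (a : P → ℕ) (b : ℚ≥0) (w : ℚ≥0) : PExpr P
  | MIN (l : List (PExpr P)) : PExpr P
  | MAX (l : List (PExpr P)) : PExpr P

namespace PExpr

variable {P : Type} [Fintype P]

/-- The value of the linear expression `Σᵢ aᵢ·pᵢ + b` under a valuation `v`. -/
def lin (a : P → ℕ) (b : ℚ≥0) (v : P → ℚ≥0) : ℚ≥0 := (∑ p, (a p : ℚ≥0) * v p) + b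

mutual
  /-- Evaluation of a parametric expression under a parameter valuation `v`. -/
  noncomputable def eval (v : P → ℚ≥0) : PExpr P → ℝ≥0∞
    | .inf => ⊤
    | .basic a b w => ENNReal.ofReal |((lin a b v : ℚ≥0) : ℝ) / (w : ℝ) - 1|
    | .MIN l => evalMin v l
    | .MAX l => evalMax v l
  /-- Evaluation of a `MIN` of a list of expressions (`⊤` for the empty list). -/
  noncomputable def evalMin (v : P → ℚ≥0) : List (PExpr P) → ℝ≥0∞
    | [] => ⊤
    | e :: l => min (eval v e) (evalMin v l)
  /-- Evaluation of a `MAX` of a list of expressions (`⊥` for the empty list). -/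
  noncomputable def evalMax (v : P → ℚ≥0) : List (PExpr P) → ℝ≥0∞
    | [] => ⊥
    | e :: l => max (eval v e) (evalMax v l)
end

/- The syntactic ordering `⊑` on parametric expressions. -/
mutual
  /-- The syntactic ordering `⊑` on parametric expressions:
  `MAX l₁ ⊑ MAX l₂` iff every element of `l₁` is `⊑` some element of `l₂`, and
  `MIN l₁ ⊑ MIN l₂` iff every element of `l₂` is `⊒` some element of `l₁`. -/
  inductive SynLe : PExpr P → PExpr P → Prop
    | basic_inf (a : P → ℕ) (b w : ℚ≥0) : SynLe (.basic a b w) .inf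
    | inf_inf : SynLe .inf .inf
    | basic_ge (a a' : P → ℕ) (b b' w : ℚ≥0) :
        1 ≤ b / w → 1 ≤ b' / w → (∀ i, a i ≤ a' i) → b ≤ b' →
        SynLe (.basic a b w) (.basic a' b' w)
    | basic_eq (a : P → ℕ) (b w : ℚ≥0) : SynLe (.basic a b w) (.basic a b w)
    | max_le (l₁ l₂ : List (PExpr P)) : Below l₁ l₂ → SynLe (.MAX l₁) (.MAX l₂)
    | min_le (l₁ l₂ : List (PExpr P)) : Above l₂ l₁ → SynLe (.MIN l₁) (.MIN l₂)

  /-- `Below l₁ l₂`: every element of `l₁` is `⊑` some element of `l₂`. -/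
  inductive Below : List (PExpr P) → List (PExpr P) → Prop
    | nil (l₂ : List (PExpr P)) : Below [] l₂
    | cons (e : PExpr P) (l₁ l₂ : List (PExpr P)) :
        LeSome e l₂ → Below l₁ l₂ → Below (e :: l₁) l₂

  /-- `LeSome e l`: `e` is `⊑` some element of `l`. -/
  inductive LeSome : PExpr P → List (PExpr P) → Prop
    | head (e e' : PExpr P) (l : List (PExpr P)) : SynLe e e' → LeSome e (e' :: l)
    | tail (e e' : PExpr P) (l : List (PExpr P)) : LeSome e l → LeSome e (e' :: l)

  /-- `Above l₂ l₁`: every element of `l₂` is `⊒` some element of `l₁`. -/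
  inductive Above : List (PExpr P) → List (PExpr P) → Prop
    | nil (l : List (PExpr P)) : Above [] l
    | cons (e' : PExpr P) (l₂ l₁ : List (PExpr P)) :
        SomeLe l₁ e' → Above l₂ l₁ → Above (e' :: l₂) l₁

  /-- `SomeLe l e'`: some element of `l` is `⊑ e'`. -/
  inductive SomeLe : List (PExpr P) → PExpr P → Prop
    | head (e : PExpr P) (l : List (PExpr P)) (e' : PExpr P) :
        SynLe e e' → SomeLe (e :: l) e'
    | tail (e : PExpr P) (l : List (PExpr P)) (e' : PExpr P) :
        SomeLe l e' → SomeLe (e :: l) e'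
end

end PExpr

namespace PExpr

variable {P : Type} [Fintype P]

theorem lin_mono {a a' : P → ℕ} {b b' : ℚ≥0} (ha : ∀ i, a i ≤ a' i) (hb : b ≤ b')
    (v : P → ℚ≥0) : lin a b v ≤ lin a' b' v := by
  unfold lin
  refine add_le_add (Finset.sum_le_sum fun p _ => ?_) hb
  exact mul_le_mul_of_nonneg_right (by exact_mod_cast ha p) zero_le

theorem basic_le {a a' : P → ℕ} {b b' w : ℚ≥0} (hbw : 1 ≤ b / w) (hbw' : 1 ≤ b' / w)
    (ha : ∀ i, a i ≤ a' i) (hb : b ≤ b') (v : P → ℚ≥0) :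
    eval v (.basic a b w) ≤ eval v (.basic a' b' w) := by
  have hw : w ≠ 0 := by rintro rfl; simp at hbw
  have hwq : (0:ℚ≥0) < w := hw.bot_lt
  have hwpos : (0:ℝ) < (w:ℝ) := by exact_mod_cast hwq
  have hwb : (w:ℝ) ≤ (b:ℝ) := by exact_mod_cast (one_le_div hwq).mp hbw
  have hblin : (b:ℝ) ≤ ((lin a b v : ℚ≥0) : ℝ) := by
    have : b ≤ lin a b v := le_add_of_nonneg_left zero_le
    exact_mod_cast this
  have hblin' : (b':ℝ) ≤ ((lin a' b' v : ℚ≥0) : ℝ) := by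
    have : b' ≤ lin a' b' v := le_add_of_nonneg_left zero_le
    exact_mod_cast this
  have hwb' : (w:ℝ) ≤ (b':ℝ) := le_trans hwb (by exact_mod_cast hb)
  have h1 : (1:ℝ) ≤ ((lin a b v : ℚ≥0) : ℝ) / (w:ℝ) := by
    rw [le_div_iff₀ hwpos, one_mul]; linarith
  have h1' : (1:ℝ) ≤ ((lin a' b' v : ℚ≥0) : ℝ) / (w:ℝ) := by
    rw [le_div_iff₀ hwpos, one_mul]; linarith
  have hlin : ((lin a b v : ℚ≥0) : ℝ) ≤ ((lin a' b' v : ℚ≥0) : ℝ) := by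
    exact_mod_cast lin_mono ha hb v
  show ENNReal.ofReal _ ≤ ENNReal.ofReal _
  rw [abs_of_nonneg (by linarith), abs_of_nonneg (by linarith)]
  apply ENNReal.ofReal_le_ofReal
  have : ((lin a b v : ℚ≥0) : ℝ) / (w:ℝ) ≤ ((lin a' b' v : ℚ≥0) : ℝ) / (w:ℝ) := by
    gcongr
  linarith

theorem synle_sound {E₁ E₂ : PExpr P} (h : SynLe E₁ E₂) :
    ∀ v : P → ℚ≥0, eval v E₁ ≤ eval v E₂ := by
  refine SynLe.rec
    (motive_1 := fun E₁ E₂ _ => ∀ v : P → ℚ≥0, eval v E₁ ≤ eval v E₂)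
    (motive_2 := fun l₁ l₂ _ => ∀ v : P → ℚ≥0, evalMax v l₁ ≤ evalMax v l₂)
    (motive_3 := fun e l _ => ∀ v : P → ℚ≥0, eval v e ≤ evalMax v l)
    (motive_4 := fun l₂ l₁ _ => ∀ v : P → ℚ≥0, evalMin v l₁ ≤ evalMin v l₂)
    (motive_5 := fun l e' _ => ∀ v : P → ℚ≥0, evalMin v l ≤ eval v e')
    ?_ ?_ ?_ ?_ ?_ ?_ ?_ ?_ ?_ ?_ ?_ ?_ ?_ ?_ h
  · intro a b w v; exact le_top
  · intro v; exact le_refl _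
  · intro a a' b b' w h1 h2 h3 h4 v; exact basic_le h1 h2 h3 h4 v
  · intro a b w v; exact le_refl _
  · intro l₁ l₂ _ ih v; exact ih v
  · intro l₁ l₂ _ ih v; exact ih v
  · intro l₂ v; exact bot_le
  · intro e l₁ l₂ _ _ ih1 ih2 v; exact max_le (ih1 v) (ih2 v)
  · intro e e' l _ ih v; exact le_max_of_le_left (ih v)
  · intro e e' l _ ih v; exact le_max_of_le_right (ih v)
  · intro l v; exact le_top
  · intro e' l₂ l₁ _ _ ih1 ih2 v; exact le_min (ih1 v) (ih2 v)
  · intro e l e'' _ ih v; exact min_le_of_left_le (ih v)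
  · intro e l e'' _ ih v; exact min_le_of_right_le (ih v)

end PExpr

/-- the syntactic ordering on parametric expressions implies the
semantic ordering: `E₁ ⊑ E₂` implies `⟦E₁⟧(v) ≤ ⟦E₂⟧(v)` for every valuation. -/
theorem stmt16 {P : Type} [Fintype P] (E₁ E₂ : PExpr P) (h : PExpr.SynLe E₁ E₂) :
    ∀ v : P → ℚ≥0, PExpr.eval v E₁ ≤ PExpr.eval v E₂ :=
  PExpr.synle_sound h
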